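/- For every controlled Markov process and every discount factor γ ∈ (0,1), there exists a Markovian policy π* such that H(d_γ^{π*}) equals the supremum of H(d_γ^π) over all (possibly non-Markovian, possibly randomized) policies π; that is, a Markovian policy maximizes the entropy of the γ-discounted state distribution over the class of all policies. -/

import Mathlib

open scoped BigOperators

/-- A controlled Markov process over finite state space `S` and action space `A`:
a transition kernel `P` and an initial distribution `μ`. -/
structure CMP (S A : Type) [Fintype S] [Fintype A] where
  P : S → A → S → ℝ
  P_nonneg : ∀ s a s', 0 ≤ P s a s'
  P_sum_one : ∀ s a, ∑ s', P s a s' = 1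
  μ : S → ℝ
  μ_nonneg : ∀ s, 0 ≤ μ s
  μ_sum_one : ∑ s, μ s = 1

/-- A history of `t` steps: states `s_0, …, s_t` and actions `a_0, …, a_{t-1}`. -/
abbrev Hist (S A : Type) (t : ℕ) : Type := (Fin (t + 1) → S) × (Fin t → A)

/-- A continuation of `k` further steps: actions `a_0, …, a_{k-1}` together with the
states those actions lead to. -/
abbrev Contin (S A : Type) (k : ℕ) : Type := (Fin k → A) × (Fin k → S)

/-- A general (possibly non-Markovian, possibly randomized) policy: for every time `t`
and history of length `t`, a probability distribution over actions. -/
structure Policy (S A : Type) [Fintype A] where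
  p : ∀ t : ℕ, Hist S A t → A → ℝ
  nonneg : ∀ t h a, 0 ≤ p t h a
  sum_one : ∀ t h, ∑ a, p t h a = 1

/-- A Markovian (randomized, time-dependent) policy: for every time `t` and current
state `s`, a probability distribution over actions. -/
structure MPolicy (S A : Type) [Fintype A] where
  p : ℕ → S → A → ℝ
  nonneg : ∀ t s a, 0 ≤ p t s a
  sum_one : ∀ t s, ∑ a, p t s a = 1

/-- The last (current) state of a history. -/
def lastState {S A : Type} {t : ℕ} (h : Hist S A t) : S := h.1 (Fin.last t)

/-- A Markovian policy viewed as a general policy. -/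
def MPolicy.toPolicy {S A : Type} [Fintype A] (m : MPolicy S A) : Policy S A where
  p := fun t h a => m.p t (lastState h) a
  nonneg := fun t h a => m.nonneg t _ a
  sum_one := fun t h => m.sum_one t _

/-- The general policy induced by a deterministic non-Markovian policy
(a function from histories to actions). -/
def detPolicy {S A : Type} [Fintype A] [DecidableEq A] (f : ∀ t : ℕ, Hist S A t → A) :
    Policy S A where
  p := fun t h a => if a = f t h then 1 else 0
  nonneg := by intro t h a; (try dsimp only); split <;> norm_num
  sum_one := by intro t h; simp

/-- The length-`i` prefix of a history. -/
def histTake {S A : Type} {t : ℕ} (h : Hist S A t) (i : ℕ) (hi : i ≤ t) : Hist S A i :=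
  (fun j => h.1 ⟨(j : ℕ), by have := j.isLt; omega⟩,
   fun j => h.2 ⟨(j : ℕ), by have := j.isLt; omega⟩)

/-- The probability that policy `π` generates the history `h` when interacting with
the CMP `M` (initial state from `μ`, actions from `π`, transitions from `P`). -/
noncomputable def histProb {S A : Type} [Fintype S] [Fintype A]
    (M : CMP S A) (π : Policy S A) {t : ℕ} (h : Hist S A t) : ℝ :=
  M.μ (h.1 0) * ∏ i : Fin t,
    (π.p i (histTake h i (Nat.le_of_lt i.isLt)) (h.2 i) *
      M.P (h.1 i.castSucc) (h.2 i) (h.1 i.succ))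

/-- The `t`-step state distribution `d_t^π(s) = Pr(s_t = s)`. -/
noncomputable def stateDist {S A : Type} [Fintype S] [Fintype A] [DecidableEq S]
    (M : CMP S A) (π : Policy S A) (t : ℕ) (s : S) : ℝ :=
  ∑ h : Hist S A t, if lastState h = s then histProb M π h else 0

/-- Shannon entropy of a distribution on a finite set (`0 log 0 = 0` since `Real.log 0 = 0`). -/
noncomputable def entropy {S : Type} [Fintype S] (d : S → ℝ) : ℝ :=
  -∑ s, d s * Real.log (d s)

/-- The state visitation frequency of a trajectory with `n+1` states. -/
noncomputable def visitFreq {S A : Type} [Fintype S] [DecidableEq S] {n : ℕ}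
    (h : Hist S A n) (s : S) : ℝ :=
  (∑ i : Fin (n + 1), if h.1 i = s then (1 : ℝ) else 0) / ((n : ℝ) + 1)

/-- The marginal state distribution `d_T^π(s) = (1/T) ∑_{t<T} d_t^π(s)`. -/
noncomputable def marginalDist {S A : Type} [Fintype S] [Fintype A] [DecidableEq S]
    (M : CMP S A) (π : Policy S A) (T : ℕ) (s : S) : ℝ :=
  (1 / (T : ℝ)) * ∑ t ∈ Finset.range T, stateDist M π t s

/-- The `γ`-discounted state distribution `d_γ^π(s) = (1-γ) ∑_t γ^t d_t^π(s)`. -/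
noncomputable def discountedDist {S A : Type} [Fintype S] [Fintype A] [DecidableEq S]
    (M : CMP S A) (π : Policy S A) (γ : ℝ) (s : S) : ℝ :=
  (1 - γ) * ∑' t : ℕ, γ ^ t * stateDist M π t s

/-- Concatenation of a length-`t` history with a `k`-step continuation. -/
def histAppend {S A : Type} {t k : ℕ} (h : Hist S A t) (c : Contin S A k) : Hist S A (t + k) :=
  (fun j => if hj : (j : ℕ) ≤ t then h.1 ⟨(j : ℕ), by omega⟩
            else c.2 ⟨(j : ℕ) - t - 1, by have := j.isLt; omega⟩,
   fun j => if hj : (j : ℕ) < t then h.2 ⟨(j : ℕ), hj⟩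
            else c.1 ⟨(j : ℕ) - t, by have := j.isLt; omega⟩)

/-- The probability that, after the prefix history `h`, running `π` (conditioned on the
full history) produces the `k`-step continuation `c`. -/
noncomputable def contProb {S A : Type} [Fintype S] [Fintype A]
    (M : CMP S A) (π : Policy S A) {t k : ℕ} (h : Hist S A t) (c : Contin S A k) : ℝ :=
  ∏ i : Fin k,
    (π.p (t + (i : ℕ))
        (histTake (histAppend h c) (t + (i : ℕ)) (by have := i.isLt; omega))
        ((histAppend h c).2 ⟨t + (i : ℕ), by have := i.isLt; omega⟩) *
      M.P ((histAppend h c).1 ⟨t + (i : ℕ), by have := i.isLt; omega⟩)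
        ((histAppend h c).2 ⟨t + (i : ℕ), by have := i.isLt; omega⟩)
        ((histAppend h c).1 ⟨t + (i : ℕ) + 1, by have := i.isLt; omega⟩))

/-- The expected entropy of the state visitation frequency of the completed trajectory,
when running `π` for `k` further steps after the prefix history `h`. -/
noncomputable def expEntFrom {S A : Type} [Fintype S] [Fintype A] [DecidableEq S]
    (M : CMP S A) (π : Policy S A) {t : ℕ} (k : ℕ) (h : Hist S A t) : ℝ :=
  ∑ c : Contin S A k, contProb M π h c * entropy (visitFreq (histAppend h c))

/-- A history has positive probability (under some policy) iff its initial state and all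
its transitions have positive probability. -/
def Reachable {S A : Type} [Fintype S] [Fintype A] (M : CMP S A) {t : ℕ}
    (h : Hist S A t) : Prop :=
  0 < M.μ (h.1 0) ∧ ∀ i : Fin t, 0 < M.P (h.1 i.castSucc) (h.2 i) (h.1 i.succ)

set_option linter.unusedSectionVars false
set_option linter.unusedVariables false
set_option maxHeartbeats 1000000

/-- Extend a length-`t` history by one action and one state. -/
def histExt {S A : Type} {t : ℕ} (h : Hist S A t) (a : A) (s' : S) : Hist S A (t + 1) :=
  (fun j => if hj : (j : ℕ) ≤ t then h.1 ⟨(j : ℕ), by omega⟩ else s',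
   fun j => if hj : (j : ℕ) < t then h.2 ⟨(j : ℕ), hj⟩ else a)

lemma histTake_histExt {S A : Type} {t : ℕ} (h : Hist S A t) (a : A) (s' : S)
    (i : ℕ) (hi : i ≤ t) :
    histTake (histExt h a s') i (by omega) = histTake h i hi := by
  unfold histTake histExt
  refine Prod.ext (funext fun j => ?_) (funext fun j => ?_) <;> dsimp only
  · rw [dif_pos (by have := j.isLt; omega)]
  · rw [dif_pos (by have := j.isLt; omega)]

lemma histTake_self {S A : Type} {t : ℕ} (h : Hist S A t) :
    histTake h t le_rfl = h := by
  unfold histTake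
  refine Prod.ext (funext fun j => ?_) (funext fun j => ?_) <;> dsimp only <;>
    exact congrArg _ (Fin.ext rfl)

lemma lastState_histExt {S A : Type} {t : ℕ} (h : Hist S A t) (a : A) (s' : S) :
    lastState (histExt h a s') = s' := by
  unfold lastState histExt
  dsimp only
  rw [dif_neg (by simp)]

/-- The one-step extension equivalence. -/
def histEquiv {S A : Type} (t : ℕ) : Hist S A t × A × S ≃ Hist S A (t + 1) where
  toFun x := histExt x.1 x.2.1 x.2.2
  invFun h := (histTake h t (by omega), h.2 ⟨t, by omega⟩, h.1 (Fin.last (t + 1)))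
  left_inv := by
    rintro ⟨h, a, s'⟩
    dsimp only
    refine Prod.ext ?_ (Prod.ext ?_ ?_)
    · exact ((histTake_histExt (S := S) (A := A) h a s' t le_rfl).trans (histTake_self h) :)
    · show (histExt h a s').2 _ = a
      unfold histExt; dsimp only; rw [dif_neg (by simp)]
    · show (histExt h a s').1 _ = s'
      unfold histExt; dsimp only; rw [dif_neg (by simp [Fin.last])]
  right_inv := by
    intro h
    dsimp only
    refine Prod.ext (funext fun j => ?_) (funext fun j => ?_)
    · show (if hj : (j : ℕ) ≤ t then _ else h.1 (Fin.last (t+1))) = h.1 j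
      split
      next hj => exact congrArg h.1 (Fin.ext rfl)
      next hj =>
        exact congrArg h.1 (Fin.ext (by simp only [Fin.val_last]; have := j.isLt; omega))
    · show (if hj : (j : ℕ) < t then _ else h.2 ⟨t, by omega⟩) = h.2 j
      split
      next hj => exact congrArg h.2 (Fin.ext rfl)
      next hj => exact congrArg h.2 (Fin.ext (by have := j.isLt; dsimp only; omega))

lemma histProb_histExt {S A : Type} [Fintype S] [Fintype A]
    (M : CMP S A) (π : Policy S A) {t : ℕ}
    (h : Hist S A t) (a : A) (s' : S) :
    histProb M π (histExt h a s')
      = histProb M π h * (π.p t h a * M.P (lastState h) a s') := by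
  unfold histProb
  rw [Fin.prod_univ_castSucc]
  have h0 : (histExt h a s').1 0 = h.1 0 := by
    show (if _ : ((0 : Fin (t+2)) : ℕ) ≤ t then _ else s') = h.1 0
    rw [dif_pos (by simp)]
    exact congrArg h.1 (Fin.ext (by simp))
  have hfac : ∀ i : Fin t,
      (π.p (i.castSucc : ℕ)
          (histTake (histExt h a s') (i.castSucc : ℕ) (Nat.le_of_lt i.castSucc.isLt))
          ((histExt h a s').2 i.castSucc) *
        M.P ((histExt h a s').1 i.castSucc.castSucc) ((histExt h a s').2 i.castSucc)
          ((histExt h a s').1 i.castSucc.succ))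
      = (π.p (i : ℕ) (histTake h (i : ℕ) (Nat.le_of_lt i.isLt)) (h.2 i) *
          M.P (h.1 i.castSucc) (h.2 i) (h.1 i.succ)) := by
    intro i
    have e2 : (histExt h a s').2 i.castSucc = h.2 i := by
      show (if _ : ((i.castSucc : Fin (t+1)) : ℕ) < t then _ else a) = h.2 i
      rw [dif_pos (by simp [i.isLt])]
      exact congrArg h.2 (Fin.ext (by simp))
    have e1 : (histExt h a s').1 i.castSucc.castSucc = h.1 i.castSucc := by
      show (if _ : _ ≤ t then _ else s') = h.1 i.castSucc
      rw [dif_pos (by first | (simp; omega) | simp | omega)]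
      exact congrArg h.1 (Fin.ext (by simp))
    have e1' : (histExt h a s').1 i.castSucc.succ = h.1 i.succ := by
      show (if _ : _ ≤ t then _ else s') = h.1 i.succ
      rw [dif_pos (by first | (simp; omega) | simp | omega)]
      exact congrArg h.1 (Fin.ext (by simp))
    have ht : histTake (histExt h a s') (i.castSucc : ℕ) (Nat.le_of_lt i.castSucc.isLt)
        = histTake h (i : ℕ) (Nat.le_of_lt i.isLt) := by
      exact (histTake_histExt h a s' (i : ℕ) (Nat.le_of_lt i.isLt) :)
    rw [e2, e1, e1', ht]
    simp
  have hlast :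
      (π.p ((Fin.last t : Fin (t+1)) : ℕ)
          (histTake (histExt h a s') ((Fin.last t : Fin (t+1)) : ℕ)
            (Nat.le_of_lt (Fin.last t).isLt))
          ((histExt h a s').2 (Fin.last t)) *
        M.P ((histExt h a s').1 (Fin.last t).castSucc) ((histExt h a s').2 (Fin.last t))
          ((histExt h a s').1 (Fin.last t).succ))
      = π.p t h a * M.P (lastState h) a s' := by
    have e2 : (histExt h a s').2 (Fin.last t) = a := by
      show (if _ : _ < t then _ else a) = a
      rw [dif_neg (by simp)]
    have e1 : (histExt h a s').1 (Fin.last t).castSucc = lastState h := by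
      show (if _ : _ ≤ t then _ else s') = lastState h
      rw [dif_pos (by simp)]
      exact congrArg h.1 (Fin.ext (by simp [Fin.last]))
    have e1' : (histExt h a s').1 (Fin.last t).succ = s' := by
      show (if _ : _ ≤ t then _ else s') = s'
      rw [dif_neg (by simp [Fin.last])]
    have ht : histTake (histExt h a s') ((Fin.last t : Fin (t+1)) : ℕ)
        (Nat.le_of_lt (Fin.last t).isLt) = h := by
      exact ((histTake_histExt h a s' t le_rfl).trans (histTake_self h) :)
    rw [e2, e1, e1', ht]
    simp [Fin.val_last]
  rw [Finset.prod_congr rfl (fun i _ => hfac i), hlast, h0]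
  ring

section Dist
variable {S A : Type} [Fintype S] [Fintype A] [DecidableEq S]

lemma histProb_nonneg (M : CMP S A) (π : Policy S A) {t : ℕ} (h : Hist S A t) :
    0 ≤ histProb M π h := by
  unfold histProb
  refine mul_nonneg (M.μ_nonneg _) (Finset.prod_nonneg fun i _ => ?_)
  exact mul_nonneg (π.nonneg _ _ _) (M.P_nonneg _ _ _)

lemma stateDist_nonneg (M : CMP S A) (π : Policy S A) (t : ℕ) (s : S) :
    0 ≤ stateDist M π t s := by
  refine Finset.sum_nonneg fun h _ => ?_
  split <;> [exact histProb_nonneg M π h; exact le_rfl]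

/-- The state-action marginal at time `t`. -/
noncomputable def saDist (M : CMP S A) (π : Policy S A) (t : ℕ) (s : S) (a : A) : ℝ :=
  ∑ h : Hist S A t, if lastState h = s then histProb M π h * π.p t h a else 0

lemma saDist_nonneg (M : CMP S A) (π : Policy S A) (t : ℕ) (s : S) (a : A) :
    0 ≤ saDist M π t s a := by
  refine Finset.sum_nonneg fun h _ => ?_
  split <;> [exact mul_nonneg (histProb_nonneg M π h) (π.nonneg _ _ _); exact le_rfl]

lemma sum_saDist (M : CMP S A) (π : Policy S A) (t : ℕ) (s : S) :
    ∑ a, saDist M π t s a = stateDist M π t s := by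
  unfold saDist stateDist
  rw [Finset.sum_comm]
  refine Finset.sum_congr rfl fun h _ => ?_
  split
  · rw [← Finset.mul_sum, π.sum_one, mul_one]
  · simp

lemma saDist_le (M : CMP S A) (π : Policy S A) (t : ℕ) (s : S) (a : A) :
    saDist M π t s a ≤ stateDist M π t s := by
  rw [← sum_saDist]
  exact Finset.single_le_sum (fun a' _ => saDist_nonneg M π t s a') (Finset.mem_univ a)

lemma stateDist_succ (M : CMP S A) (π : Policy S A) (t : ℕ) (s' : S) :
    stateDist M π (t + 1) s' = ∑ s, ∑ a, saDist M π t s a * M.P s a s' := by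
  unfold stateDist
  rw [← Equiv.sum_comp (histEquiv (S := S) (A := A) t)]
  have : ∀ x : Hist S A t × A × S,
      (if lastState (histEquiv t x) = s' then histProb M π (histEquiv t x) else 0)
      = if x.2.2 = s' then
          histProb M π x.1 * (π.p t x.1 x.2.1 * M.P (lastState x.1) x.2.1 x.2.2) else 0 := by
    rintro ⟨h, a, σ⟩
    show (if lastState (histExt h a σ) = s' then histProb M π (histExt h a σ) else 0) = _
    rw [lastState_histExt, histProb_histExt]
  rw [Finset.sum_congr rfl fun x _ => this x]
  rw [Fintype.sum_prod_type]
  have hswap : ∀ h : Hist S A t, (∑ y : A × S, if y.2 = s' then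
      histProb M π h * (π.p t h y.1 * M.P (lastState h) y.1 y.2) else 0)
      = ∑ a, histProb M π h * π.p t h a * M.P (lastState h) a s' := by
    intro h
    rw [Fintype.sum_prod_type]
    refine Finset.sum_congr rfl fun a _ => ?_
    rw [Finset.sum_ite_eq' Finset.univ s' (fun σ => histProb M π h *
      (π.p t h a * M.P (lastState h) a σ))]
    simp [mul_assoc]
  rw [Finset.sum_congr rfl fun h _ => hswap h]
  -- now: ∑ h ∑ a, hp h * πp * P (last h) a s' = ∑ s ∑ a saDist * P
  have e1 : ∀ s a, saDist M π t s a * M.P s a s'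
      = ∑ h : Hist S A t, if lastState h = s then
          histProb M π h * π.p t h a * M.P (lastState h) a s' else 0 := by
    intro s a
    unfold saDist
    rw [Finset.sum_mul]
    refine Finset.sum_congr rfl fun h _ => ?_
    split
    next hc => rw [hc]
    next => rw [zero_mul]
  refine Eq.symm ?_
  rw [Finset.sum_congr rfl fun s _ =>
    Finset.sum_congr rfl fun a _ => e1 s a]
  rw [Finset.sum_comm]
  have e2 : ∀ a : A, (∑ s, ∑ h : Hist S A t, if lastState h = s then
        histProb M π h * π.p t h a * M.P (lastState h) a s' else 0)
      = ∑ h : Hist S A t, histProb M π h * π.p t h a * M.P (lastState h) a s' := by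
    intro a
    rw [Finset.sum_comm]
    refine Finset.sum_congr rfl fun h _ => ?_
    simp
  rw [Finset.sum_congr rfl fun a _ => e2 a]
  exact Finset.sum_comm

end Dist

section Markovize
variable {S A : Type} [Fintype S] [Fintype A] [DecidableEq S] [Nonempty A]

lemma stateDist_zero (M : CMP S A) (π : Policy S A) (s : S) :
    stateDist M π 0 s = M.μ s := by
  unfold stateDist histProb lastState
  rw [Fintype.sum_prod_type]
  have e : ∀ f : Fin 1 → S, (∑ g : Fin 0 → A,
      if (f, g).1 (Fin.last 0) = s then M.μ ((f, g).1 0) * ∏ i : Fin 0,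
        (π.p (i:ℕ) (histTake (f,g) (i:ℕ) (Nat.le_of_lt i.isLt)) ((f,g).2 i) *
          M.P ((f,g).1 i.castSucc) ((f,g).2 i) ((f,g).1 i.succ)) else 0)
      = if f 0 = s then M.μ (f 0) else 0 := by
    intro f
    rw [Fintype.sum_unique]
    simp [Fin.last]
  rw [Finset.sum_congr rfl fun f _ => e f]
  rw [← Equiv.sum_comp (Equiv.funUnique (Fin 1) S).symm]
  simp

lemma sum_histProb (M : CMP S A) (π : Policy S A) (t : ℕ) :
    ∑ h : Hist S A t, histProb M π h = 1 := by
  induction t with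
  | zero =>
    have : ∀ s, stateDist M π 0 s = M.μ s := stateDist_zero M π
    have h2 : ∑ s, stateDist M π 0 s = 1 := by
      rw [Finset.sum_congr rfl fun s _ => this s, M.μ_sum_one]
    rw [← h2]
    unfold stateDist
    rw [Finset.sum_comm]
    refine Finset.sum_congr rfl fun h _ => ?_
    simp
  | succ t ih =>
    rw [← Equiv.sum_comp (histEquiv (S := S) (A := A) t)]
    have e : ∀ x : Hist S A t × A × S, histProb M π (histEquiv t x)
        = histProb M π x.1 * (π.p t x.1 x.2.1 * M.P (lastState x.1) x.2.1 x.2.2) := by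
      rintro ⟨h, a, σ⟩
      exact histProb_histExt M π h a σ
    rw [Finset.sum_congr rfl fun x _ => e x, Fintype.sum_prod_type]
    have e2 : ∀ h : Hist S A t, (∑ y : A × S,
        histProb M π h * (π.p t h y.1 * M.P (lastState h) y.1 y.2)) = histProb M π h := by
      intro h
      rw [Fintype.sum_prod_type]
      have : ∀ a, (∑ σ, histProb M π h * (π.p t h a * M.P (lastState h) a σ))
          = histProb M π h * π.p t h a := by
        intro a
        rw [← Finset.mul_sum, ← Finset.mul_sum, M.P_sum_one, mul_one]
      rw [Finset.sum_congr rfl fun a _ => this a, ← Finset.mul_sum, π.sum_one, mul_one]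
    rw [Finset.sum_congr rfl fun h _ => e2 h, ih]

lemma stateDist_le_one (M : CMP S A) (π : Policy S A) (t : ℕ) (s : S) :
    stateDist M π t s ≤ 1 := by
  rw [← sum_histProb M π t]
  unfold stateDist
  refine Finset.sum_le_sum fun h _ => ?_
  split <;> [exact le_rfl; exact histProb_nonneg M π h]

lemma stateDist_eq_zero (M : CMP S A) (π : Policy S A) {t : ℕ} {s : S}
    (h : ¬ 0 < stateDist M π t s) : stateDist M π t s = 0 :=
  le_antisymm (not_lt.1 h) (stateDist_nonneg M π t s)

/-- The Markovization of a general policy. -/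
noncomputable def markovize (M : CMP S A) (π : Policy S A) : MPolicy S A where
  p t s a := if 0 < stateDist M π t s then saDist M π t s a / stateDist M π t s
             else (Fintype.card A : ℝ)⁻¹
  nonneg := by
    intro t s a; split
    · exact div_nonneg (saDist_nonneg M π t s a) (stateDist_nonneg M π t s)
    · positivity
  sum_one := by
    intro t s
    by_cases hd : 0 < stateDist M π t s
    · simp only [if_pos hd]
      rw [← Finset.sum_div, sum_saDist, div_self (ne_of_gt hd)]
    · simp only [if_neg hd, Finset.sum_const, Finset.card_univ, nsmul_eq_mul]
      rw [mul_inv_cancel₀]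
      exact_mod_cast Fintype.card_ne_zero

lemma saDist_toPolicy (M : CMP S A) (m : MPolicy S A) (t : ℕ) (s : S) (a : A) :
    saDist M m.toPolicy t s a = m.p t s a * stateDist M m.toPolicy t s := by
  unfold saDist stateDist
  rw [Finset.mul_sum]
  refine Finset.sum_congr rfl fun h _ => ?_
  split
  next hc =>
    show histProb M m.toPolicy h * m.p t (lastState h) a = _
    rw [hc]; ring
  next => rw [mul_zero]

lemma markovize_stateDist (M : CMP S A) (π : Policy S A) :
    ∀ t s, stateDist M (markovize M π).toPolicy t s = stateDist M π t s := by
  intro t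
  induction t with
  | zero => intro s; rw [stateDist_zero, stateDist_zero]
  | succ t ih =>
    have hsa : ∀ s a, saDist M (markovize M π).toPolicy t s a = saDist M π t s a := by
      intro s a
      rw [saDist_toPolicy, ih s]
      show (if 0 < stateDist M π t s then saDist M π t s a / stateDist M π t s
            else (Fintype.card A : ℝ)⁻¹) * stateDist M π t s = saDist M π t s a
      by_cases hd : 0 < stateDist M π t s
      · rw [if_pos hd, div_mul_cancel₀ _ (ne_of_gt hd)]
      · rw [if_neg hd, stateDist_eq_zero M π hd, mul_zero]
        refine (le_antisymm ?_ (saDist_nonneg M π t s a)).symm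
        exact le_of_le_of_eq (saDist_le M π t s a) (stateDist_eq_zero M π hd)
    intro s'
    rw [stateDist_succ, stateDist_succ]
    exact Finset.sum_congr rfl fun s _ => Finset.sum_congr rfl fun a _ => by rw [hsa s a]

lemma markovize_discounted (M : CMP S A) (π : Policy S A) (γ : ℝ) (s : S) :
    discountedDist M (markovize M π).toPolicy γ s = discountedDist M π γ s := by
  unfold discountedDist
  congr 1
  exact tsum_congr fun t => by rw [markovize_stateDist M π t s]

end Markovize

section Compactness
variable {S A : Type} [Fintype S] [Fintype A] [DecidableEq S] [Nonempty A]

/-- The compact parameter set of Markovian policies. -/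
def PolK (S A : Type) [Fintype A] : Set (ℕ → S → A → ℝ) :=
  {p | (∀ t s a, 0 ≤ p t s a) ∧ ∀ t s, ∑ a, p t s a = 1}

lemma isCompact_PolK : IsCompact (PolK S A) := by
  have hC : IsCompact (Set.pi Set.univ fun _ : ℕ => Set.pi Set.univ fun _ : S =>
      Set.pi Set.univ fun _ : A => Set.Icc (0:ℝ) 1) :=
    isCompact_univ_pi fun _ => isCompact_univ_pi fun _ => isCompact_univ_pi fun _ =>
      isCompact_Icc
  refine IsCompact.of_isClosed_subset hC ?_ ?_
  · have h1 : IsClosed {p : ℕ → S → A → ℝ | ∀ t s a, 0 ≤ p t s a} := by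
      have : {p : ℕ → S → A → ℝ | ∀ t s a, 0 ≤ p t s a}
          = ⋂ t, ⋂ s, ⋂ a, {p : ℕ → S → A → ℝ | 0 ≤ p t s a} := by
        ext p; simp
      rw [this]
      refine isClosed_iInter fun t => isClosed_iInter fun s => isClosed_iInter fun a => ?_
      exact isClosed_le continuous_const
        ((continuous_apply a).comp ((continuous_apply s).comp (continuous_apply t)))
    have h2 : IsClosed {p : ℕ → S → A → ℝ | ∀ t s, ∑ a, p t s a = 1} := by
      have : {p : ℕ → S → A → ℝ | ∀ t s, ∑ a, p t s a = 1}
          = ⋂ t, ⋂ s, {p : ℕ → S → A → ℝ | ∑ a, p t s a = 1} := by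
        ext p; simp
      rw [this]
      refine isClosed_iInter fun t => isClosed_iInter fun s => ?_
      refine isClosed_eq ?_ continuous_const
      exact continuous_finset_sum _ fun a _ =>
        (continuous_apply a).comp ((continuous_apply s).comp (continuous_apply t))
    exact h1.inter h2
  · rintro p ⟨hn, hs⟩
    intro t _
    refine Set.mem_univ_pi.2 fun s => Set.mem_univ_pi.2 fun a => ?_
    refine ⟨hn t s a, ?_⟩
    calc p t s a ≤ ∑ a', p t s a' :=
          Finset.single_le_sum (fun a' _ => hn t s a') (Finset.mem_univ a)
    _ = 1 := hs t s

/-- The Markovian policy corresponding to a point of `PolK`. -/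
def PolK.toMP (q : PolK S A) : MPolicy S A := ⟨q.1, q.2.1, q.2.2⟩

lemma continuous_eval (t : ℕ) (s : S) (a : A) :
    Continuous fun q : PolK S A => (q : ℕ → S → A → ℝ) t s a :=
  (continuous_apply a).comp ((continuous_apply s).comp ((continuous_apply t).comp
    continuous_subtype_val))

lemma continuous_stateDist (M : CMP S A) (t : ℕ) (s : S) :
    Continuous fun q : PolK S A => stateDist M (PolK.toMP q).toPolicy t s := by
  unfold stateDist
  refine continuous_finset_sum _ fun h _ => ?_
  by_cases hc : lastState h = s
  · simp only [if_pos hc]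
    unfold histProb
    refine continuous_const.mul (continuous_finset_prod _ fun i _ => ?_)
    exact ((continuous_eval (i:ℕ) _ _).mul continuous_const)
  · simp only [if_neg hc]
    exact continuous_const

lemma continuous_discounted (M : CMP S A) {γ : ℝ} (hγ : γ ∈ Set.Ioo (0:ℝ) 1) (s : S) :
    Continuous fun q : PolK S A => discountedDist M (PolK.toMP q).toPolicy γ s := by
  unfold discountedDist
  refine continuous_const.mul ?_
  refine continuous_tsum (f := fun t q => γ ^ t * stateDist M (PolK.toMP q).toPolicy t s)
    (u := fun t => γ ^ t) (fun t => continuous_const.mul (continuous_stateDist M t s))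
    (summable_geometric_of_lt_one (le_of_lt hγ.1) hγ.2) ?_
  intro t q
  rw [Real.norm_eq_abs, abs_mul, abs_of_nonneg (pow_nonneg (le_of_lt hγ.1) t),
    abs_of_nonneg (stateDist_nonneg M _ t s)]
  calc γ ^ t * stateDist M (PolK.toMP q).toPolicy t s ≤ γ ^ t * 1 := by
        exact mul_le_mul_of_nonneg_left (stateDist_le_one M _ t s)
          (pow_nonneg (le_of_lt hγ.1) t)
  _ = γ ^ t := mul_one _

lemma continuous_entropy_discounted (M : CMP S A) {γ : ℝ} (hγ : γ ∈ Set.Ioo (0:ℝ) 1) :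
    Continuous fun q : PolK S A =>
      entropy (fun s => discountedDist M (PolK.toMP q).toPolicy γ s) := by
  unfold entropy
  refine Continuous.neg (continuous_finset_sum _ fun s _ => ?_)
  exact Real.continuous_mul_log.comp (continuous_discounted M hγ s)

end Compactness
/-- for every discount factor `γ ∈ (0,1)` there is a Markovian policy whose
`γ`-discounted state distribution entropy attains the supremum over all (possibly
non-Markovian, possibly randomized) policies. -/
theorem markovian_maximizes_discounted_entropy
    {S A : Type} [Fintype S] [Fintype A] [Nonempty S] [Nonempty A] [DecidableEq S]
    (M : CMP S A) (γ : ℝ) (hγ : γ ∈ Set.Ioo (0 : ℝ) 1) :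
    ∃ π' : MPolicy S A,
      entropy (fun s => discountedDist M π'.toPolicy γ s)
        = ⨆ π : Policy S A, entropy (fun s => discountedDist M π γ s) := by
  classical
  have hunif : (fun _ _ _ => (Fintype.card A : ℝ)⁻¹ : ℕ → S → A → ℝ) ∈ PolK S A := by
    constructor
    · intro t s a; positivity
    · intro t s
      simp only [Finset.sum_const, Finset.card_univ, nsmul_eq_mul]
      rw [mul_inv_cancel₀]
      exact_mod_cast Fintype.card_ne_zero
  haveI : Nonempty (PolK S A) := ⟨⟨_, hunif⟩⟩
  haveI : CompactSpace (PolK S A) := isCompact_iff_compactSpace.mp isCompact_PolK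
  obtain ⟨q0, -, hq0⟩ := isCompact_univ.exists_isMaxOn (Set.univ_nonempty)
    ((continuous_entropy_discounted M hγ).continuousOn)
  have key : ∀ π : Policy S A, entropy (fun s => discountedDist M π γ s)
      ≤ entropy (fun s => discountedDist M (PolK.toMP q0).toPolicy γ s) := by
    intro π
    have h1 : entropy (fun s => discountedDist M π γ s)
        = entropy (fun s => discountedDist M (markovize M π).toPolicy γ s) := by
      congr 1; funext s; rw [markovize_discounted]
    have h2 : entropy (fun s => discountedDist M (markovize M π).toPolicy γ s)
        = entropy (fun s => discountedDist M (PolK.toMP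
            ⟨(markovize M π).p, (markovize M π).nonneg, (markovize M π).sum_one⟩).toPolicy
            γ s) := rfl
    rw [h1, h2]
    exact hq0 (Set.mem_univ
      (⟨(markovize M π).p, (markovize M π).nonneg, (markovize M π).sum_one⟩ : PolK S A))
  have hbdd : BddAbove (Set.range fun π : Policy S A =>
      entropy (fun s => discountedDist M π γ s)) := by
    refine ⟨entropy (fun s => discountedDist M (PolK.toMP q0).toPolicy γ s), ?_⟩
    rintro _ ⟨π, rfl⟩
    exact key π
  haveI : Nonempty (Policy S A) := ⟨(PolK.toMP ⟨_, hunif⟩).toPolicy⟩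
  exact ⟨PolK.toMP q0,
    le_antisymm (le_ciSup hbdd ((PolK.toMP q0).toPolicy)) (ciSup_le key)⟩
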